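/- Let u₁, u₂, u₃ be integers none of which is divisible by 3. The equation u₁X³ + u₂Y³ + u₃Z³ = 0 has a solution (X, Y, Z) ∈ ℚ₃³ with (X, Y, Z) ≠ (0, 0, 0) if and only if there exist indices i ≠ j in {1, 2, 3} such that u_i ≡ u_j (mod 9) or u_i ≡ −u_j (mod 9). -/

import Mathlib

open PadicInt Polynomial

lemma norm_int_eq_one (k : ℤ) (hk : ¬(3:ℤ) ∣ k) : ‖(k : ℤ_[3])‖ = 1 := by
  rcases lt_or_eq_of_le (PadicInt.norm_le_one (k : ℤ_[3])) with h | h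
  · rw [PadicInt.norm_int_lt_one_iff_dvd] at h
    exact absurd (by exact_mod_cast h) hk
  · exact h

lemma cube_unit (x : ℤ_[3]) (h : ‖x‖ = 1) :
    toZModPow 2 (x^3) = 1 ∨ toZModPow 2 (x^3) = -1 := by
  have hu : IsUnit (toZModPow 2 x) := (PadicInt.isUnit_iff.2 h).map _
  rw [map_pow]
  exact (by decide : ∀ y : ZMod 9, IsUnit y → y^3 = 1 ∨ y^3 = -1) _ hu

lemma cube_nonunit (x : ℤ_[3]) (h : ‖x‖ < 1) : toZModPow 2 (x^3) = 0 := by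
  have h9 : (9:ℤ_[3]) ∣ x^3 := by
    rw [PadicInt.norm_lt_one_iff_dvd] at h
    obtain ⟨y, rfl⟩ := h
    exact ⟨3 * y^3, by push_cast; ring⟩
  rw [← RingHom.mem_ker, ker_toZModPow, Ideal.mem_span_singleton]
  have h' : ((3:ℕ):ℤ_[3])^2 = (9:ℤ_[3]) := by norm_num
  rw [h']; exact h9

lemma cube_root_exists (a : ℤ_[3]) (h : toZModPow 2 a = 1) : ∃ t : ℤ_[3], t^3 = a := by
  have hcast := cast_toZModPow 2 3 (by norm_num) a
  rw [h] at hcast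
  have h27 : toZModPow 3 a = 1 ∨ toZModPow 3 a = 10 ∨ toZModPow 3 a = 19 := by
    revert hcast
    exact (by decide : ∀ y : ZMod (3^3), (ZMod.cast y : ZMod (3^2)) = 1 → y = 1 ∨ y = 10 ∨ y = 19) (toZModPow 3 a)
  obtain ⟨c, hc1, hc2⟩ : ∃ c : ℤ_[3], ‖c‖ = 1 ∧ toZModPow 3 (c^3) = toZModPow 3 a := by
    rcases h27 with h'|h'|h'
    · refine ⟨(1:ℤ), norm_int_eq_one 1 (by norm_num), ?_⟩
      rw [h', show (((1:ℤ):ℤ_[3])^3) = (((1:ℤ)^3 : ℤ):ℤ_[3]) by push_cast; ring, map_intCast]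
      decide
    · refine ⟨(4:ℤ), norm_int_eq_one 4 (by norm_num), ?_⟩
      rw [h', show (((4:ℤ):ℤ_[3])^3) = (((4:ℤ)^3 : ℤ):ℤ_[3]) by push_cast; ring, map_intCast]
      decide
    · refine ⟨(7:ℤ), norm_int_eq_one 7 (by norm_num), ?_⟩
      rw [h', show (((7:ℤ):ℤ_[3])^3) = (((7:ℤ)^3 : ℤ):ℤ_[3]) by push_cast; ring, map_intCast]
      decide
  have hnorm : ‖c^3 - a‖ ≤ ((3:ℕ):ℝ)^(-(3:ℕ):ℤ) := by
    refine (norm_le_pow_iff_mem_span_pow (c^3-a) 3).2 ?_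
    rw [← ker_toZModPow]
    exact RingHom.mem_ker.2 (by rw [map_sub, hc2, sub_self])
  set F : Polynomial ℤ_[3] := X^3 - C a with hF
  have hFeval : F.eval c = c^3 - a := by simp [hF]
  have hFd : F.derivative = C 3 * X^2 := by
    simp [hF, derivative_pow]
  have hFdeval : F.derivative.eval c = 3 * c^2 := by simp [hFd]
  have hnd : ‖F.derivative.eval c‖ = (3:ℝ)⁻¹ := by
    rw [hFdeval, norm_mul, norm_pow, hc1]
    rw [show (3:ℤ_[3]) = ((3:ℕ):ℤ_[3]) by norm_num, PadicInt.norm_p]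
    norm_num
  have key : ‖F.eval c‖ < ‖F.derivative.eval c‖^2 := by
    rw [hFeval, hnd]
    calc ‖c^3 - a‖ ≤ ((3:ℕ):ℝ)^(-(3:ℕ):ℤ) := hnorm
    _ < (3:ℝ)⁻¹ ^2 := by norm_num
  obtain ⟨z, hz, -⟩ := hensels_lemma key
  refine ⟨z, ?_⟩
  rw [hF] at hz
  simpa [sub_eq_zero] using hz

lemma key (a b c e f g : ZMod 9)
    (ha : ZMod.castHom (by norm_num : (3:ℕ) ∣ 9) (ZMod 3) a ≠ 0)
    (hb : ZMod.castHom (by norm_num : (3:ℕ) ∣ 9) (ZMod 3) b ≠ 0)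
    (hc : ZMod.castHom (by norm_num : (3:ℕ) ∣ 9) (ZMod 3) c ≠ 0)
    (he : e = 0 ∨ e = 1 ∨ e = -1) (hf : f = 0 ∨ f = 1 ∨ f = -1)
    (hg : g = 0 ∨ g = 1 ∨ g = -1) (hne : ¬(e = 0 ∧ f = 0 ∧ g = 0))
    (heq : a * e + b * f + c * g = 0) :
    (a = b ∨ a = -b) ∨ (a = c ∨ a = -c) ∨ (b = c ∨ b = -c) := by
  rcases he with rfl|rfl|rfl <;> rcases hf with rfl|rfl|rfl <;> rcases hg with rfl|rfl|rfl <;>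
    (revert ha hb hc hne heq; revert a b c; decide)

set_option maxHeartbeats 1000000 in
/-- Let `u₁, u₂, u₃` be integers none of which is divisible by `3`. The
equation `u₁X³ + u₂Y³ + u₃Z³ = 0` has a nontrivial solution in `ℚ₃` if and only if
`u_i ≡ ±u_j (mod 9)` for some `i ≠ j`. -/
theorem stmt8 (u : Fin 3 → ℤ) (hu : ∀ i, ¬(3 ∣ u i)) :
    (∃ X Y Z : ℚ_[3], (X, Y, Z) ≠ (0, 0, 0) ∧
        (u 0 : ℚ_[3]) * X ^ 3 + (u 1 : ℚ_[3]) * Y ^ 3 + (u 2 : ℚ_[3]) * Z ^ 3 = 0) ↔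
      ∃ i j : Fin 3, i ≠ j ∧ (u i ≡ u j [ZMOD 9] ∨ u i ≡ -u j [ZMOD 9]) := by
  constructor
  · rintro ⟨X, Y, Z, hXYZ, h⟩
    -- not all zero
    have hnz : X ≠ 0 ∨ Y ≠ 0 ∨ Z ≠ 0 := by
      by_contra hcon
      push_neg at hcon
      exact hXYZ (by simp [hcon.1, hcon.2.1, hcon.2.2])
    -- pick coordinate of max norm
    obtain ⟨c, hcm, hcX, hcY, hcZ⟩ :
        ∃ c : ℚ_[3], (c = X ∨ c = Y ∨ c = Z) ∧ ‖X‖ ≤ ‖c‖ ∧ ‖Y‖ ≤ ‖c‖ ∧ ‖Z‖ ≤ ‖c‖ := by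
      rcases le_total ‖X‖ ‖Y‖ with h1 | h1
      · rcases le_total ‖Y‖ ‖Z‖ with h2 | h2
        · exact ⟨Z, Or.inr (Or.inr rfl), h1.trans h2, h2, le_refl _⟩
        · exact ⟨Y, Or.inr (Or.inl rfl), h1, le_refl _, h2⟩
      · rcases le_total ‖X‖ ‖Z‖ with h2 | h2
        · exact ⟨Z, Or.inr (Or.inr rfl), h2, (h1.trans h2), le_refl _⟩
        · exact ⟨X, Or.inl rfl, le_refl _, h1, h2⟩
    have hc0 : c ≠ 0 := by
      rcases hnz with h'|h'|h'
      · exact fun hc => h' (norm_le_zero_iff.1 (by simpa [hc] using hcX))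
      · exact fun hc => h' (norm_le_zero_iff.1 (by simpa [hc] using hcY))
      · exact fun hc => h' (norm_le_zero_iff.1 (by simpa [hc] using hcZ))
    have hcpos : 0 < ‖c‖ := norm_pos_iff.2 hc0
    -- integer coordinates
    set x : ℤ_[3] := ⟨X/c, by rw [norm_div]; exact div_le_one_of_le₀ hcX (le_of_lt hcpos)⟩ with hx
    set y : ℤ_[3] := ⟨Y/c, by rw [norm_div]; exact div_le_one_of_le₀ hcY (le_of_lt hcpos)⟩ with hy
    set z : ℤ_[3] := ⟨Z/c, by rw [norm_div]; exact div_le_one_of_le₀ hcZ (le_of_lt hcpos)⟩ with hz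
    have heqq : (u 0 : ℚ_[3]) * (X/c)^3 + (u 1 : ℚ_[3]) * (Y/c)^3 + (u 2 : ℚ_[3]) * (Z/c)^3 = 0 := by
      field_simp
      linear_combination h
    have heqz : ((u 0 : ℤ) : ℤ_[3]) * x^3 + ((u 1 : ℤ) : ℤ_[3]) * y^3 + ((u 2 : ℤ) : ℤ_[3]) * z^3 = 0 := by
      apply Subtype.ext
      push_cast
      exact heqq
    have hone : ‖x‖ = 1 ∨ ‖y‖ = 1 ∨ ‖z‖ = 1 := by
      rcases hcm with rfl|rfl|rfl
      · exact Or.inl (by show ‖c/c‖ = 1; rw [div_self hc0, norm_one])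
      · exact Or.inr (Or.inl (by show ‖c/c‖ = 1; rw [div_self hc0, norm_one]))
      · exact Or.inr (Or.inr (by show ‖c/c‖ = 1; rw [div_self hc0, norm_one]))
    -- pass to ZMod 9
    have hmod := congrArg (toZModPow 2) heqz
    rw [map_add, map_add, map_mul, map_mul, map_mul, map_intCast, map_intCast, map_intCast,
      map_zero] at hmod
    have hcases : ∀ w : ℤ_[3],
        toZModPow 2 (w^3) = 0 ∨ toZModPow 2 (w^3) = 1 ∨ toZModPow 2 (w^3) = -1 := by
      intro w
      rcases lt_or_eq_of_le (PadicInt.norm_le_one w) with h'|h'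
      · exact Or.inl (cube_nonunit w h')
      · exact Or.inr (cube_unit w h')
    have hnonz : ∀ w : ℤ_[3], ‖w‖ = 1 → toZModPow 2 (w^3) ≠ 0 := by
      intro w hw
      rcases cube_unit w hw with h'|h' <;> rw [h'] <;> decide
    have hne : ¬(toZModPow 2 (x^3) = 0 ∧ toZModPow 2 (y^3) = 0 ∧ toZModPow 2 (z^3) = 0) := by
      rintro ⟨h1, h2, h3⟩
      rcases hone with h'|h'|h'
      · exact hnonz x h' h1
      · exact hnonz y h' h2
      · exact hnonz z h' h3
    have hcast : ∀ i, ZMod.castHom (by norm_num : (3:ℕ) ∣ 9) (ZMod 3) ((u i : ℤ) : ZMod 9) ≠ 0 := by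
      intro i h0
      apply hu i
      rw [map_intCast] at h0
      have h1 := (ZMod.intCast_zmod_eq_zero_iff_dvd (u i) 3).1 h0
      exact_mod_cast h1
    have := key ((u 0 : ℤ) : ZMod 9) ((u 1 : ℤ) : ZMod 9) ((u 2 : ℤ) : ZMod 9)
      (toZModPow 2 (x^3)) (toZModPow 2 (y^3)) (toZModPow 2 (z^3))
      (hcast 0) (hcast 1) (hcast 2) (hcases x) (hcases y) (hcases z) hne hmod
    have conv : ∀ i j : Fin 3,
        (((u i : ℤ) : ZMod 9) = ((u j : ℤ) : ZMod 9) ∨ ((u i : ℤ) : ZMod 9) = -((u j : ℤ) : ZMod 9)) →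
        (u i ≡ u j [ZMOD 9] ∨ u i ≡ -u j [ZMOD 9]) := by
      intro i j hh
      rcases hh with hh|hh
      · exact Or.inl ((ZMod.intCast_eq_intCast_iff _ _ _).1 hh)
      · refine Or.inr ((ZMod.intCast_eq_intCast_iff _ _ _).1 ?_)
        push_cast
        exact hh
    rcases this with h'|h'|h'
    · exact ⟨0, 1, by decide, conv 0 1 h'⟩
    · exact ⟨0, 2, by decide, conv 0 2 h'⟩
    · exact ⟨1, 2, by decide, conv 1 2 h'⟩
  · rintro ⟨i, j, hij, hmod⟩
    have hA : IsUnit ((u i : ℤ) : ℤ_[3]) := PadicInt.isUnit_iff.2 (norm_int_eq_one _ (hu i))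
    obtain ⟨v, hv⟩ := hA.exists_right_inv
    obtain ⟨t, ht⟩ : ∃ t : ℤ_[3], ((u i : ℤ) : ℤ_[3]) * t^3 = -((u j : ℤ) : ℤ_[3]) := by
      have hAs : ((u i : ℤ) : ℤ_[3]) * (-((u j : ℤ) : ℤ_[3]) * v) = -((u j : ℤ) : ℤ_[3]) := by
        calc ((u i : ℤ) : ℤ_[3]) * (-((u j : ℤ) : ℤ_[3]) * v)
            = -((u j : ℤ) : ℤ_[3]) * (((u i : ℤ) : ℤ_[3]) * v) := by ring
        _ = -((u j : ℤ) : ℤ_[3]) := by rw [hv, mul_one]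
      have hAu : IsUnit (toZModPow 2 ((u i : ℤ) : ℤ_[3])) := hA.map _
      have hmap : (toZModPow 2 ((u i : ℤ) : ℤ_[3])) * (toZModPow 2 (-((u j : ℤ) : ℤ_[3]) * v))
          = toZModPow 2 (-((u j : ℤ) : ℤ_[3])) := by rw [← map_mul, hAs]
      rcases hmod with hm|hm
      · have h1 : ((u i : ℤ) : ZMod 9) = ((u j : ℤ) : ZMod 9) :=
          (ZMod.intCast_eq_intCast_iff _ _ _).2 hm
        have h3 : toZModPow 2 (-((u j : ℤ) : ℤ_[3]) * v) = -1 := by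
          apply hAu.mul_left_cancel
          rw [hmap, map_neg, map_intCast, map_intCast, h1]
          ring
        have h4 : toZModPow 2 (-(-((u j : ℤ) : ℤ_[3]) * v)) = 1 := by rw [map_neg, h3]; ring
        obtain ⟨t, ht⟩ := cube_root_exists _ h4
        refine ⟨-t, ?_⟩
        have h5 : (-t)^3 = -(t^3) := by ring
        rw [h5, ht, neg_neg, hAs]
      · have h1 : ((u i : ℤ) : ZMod 9) = ((-u j : ℤ) : ZMod 9) :=
          (ZMod.intCast_eq_intCast_iff _ _ _).2 hm
        have h3 : toZModPow 2 (-((u j : ℤ) : ℤ_[3]) * v) = 1 := by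
          apply hAu.mul_left_cancel
          rw [hmap, map_neg, map_intCast, map_intCast, h1, mul_one]
          push_cast
          ring
        obtain ⟨t, ht⟩ := cube_root_exists _ h3
        exact ⟨t, by rw [ht, hAs]⟩
    have h5 : ((u i : ℤ) : ℤ_[3]) * t^3 + ((u j : ℤ) : ℤ_[3]) = 0 := by rw [ht]; ring
    have h6 := congrArg (fun w : ℤ_[3] => (w : ℚ_[3])) h5
    push_cast at h6
    have heq : (u i : ℚ_[3]) * ((t : ℚ_[3]))^3 + (u j : ℚ_[3]) = 0 := h6
    fin_cases i <;> fin_cases j <;> first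
      | exact absurd rfl hij
      | exact ⟨(t : ℚ_[3]), 1, 0, by simp [Prod.ext_iff], by
          have heq' : (u 0 : ℚ_[3]) * ((t : ℚ_[3]))^3 + (u 1 : ℚ_[3]) = 0 := heq
          linear_combination heq'⟩
      | exact ⟨(t : ℚ_[3]), 0, 1, by simp [Prod.ext_iff], by
          have heq' : (u 0 : ℚ_[3]) * ((t : ℚ_[3]))^3 + (u 2 : ℚ_[3]) = 0 := heq
          linear_combination heq'⟩
      | exact ⟨1, (t : ℚ_[3]), 0, by simp [Prod.ext_iff], by
          have heq' : (u 1 : ℚ_[3]) * ((t : ℚ_[3]))^3 + (u 0 : ℚ_[3]) = 0 := heq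
          linear_combination heq'⟩
      | exact ⟨0, (t : ℚ_[3]), 1, by simp [Prod.ext_iff], by
          have heq' : (u 1 : ℚ_[3]) * ((t : ℚ_[3]))^3 + (u 2 : ℚ_[3]) = 0 := heq
          linear_combination heq'⟩
      | exact ⟨1, 0, (t : ℚ_[3]), by simp [Prod.ext_iff], by
          have heq' : (u 2 : ℚ_[3]) * ((t : ℚ_[3]))^3 + (u 0 : ℚ_[3]) = 0 := heq
          linear_combination heq'⟩
      | exact ⟨0, 1, (t : ℚ_[3]), by simp [Prod.ext_iff], by
          have heq' : (u 2 : ℚ_[3]) * ((t : ℚ_[3]))^3 + (u 1 : ℚ_[3]) = 0 := heq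
          linear_combination heq'⟩
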